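/- θ-relation: in the homology of the configuration spaces of the theta graph Θ₃, the clockwise-oriented star classes α and α' at the two essential vertices are equal: α − α' = 0 in H₁(B₂(Θ₃)). -/

import Mathlib

/-!
A combinatorial model of the Świątkowski chain complex of a finite graph
(finite CW-complex of dimension ≤ 1), computing the homology of its unordered
configuration spaces (An–Drummond-Cole–Knudsen).

A graph is given by a vertex type `V`, an edge type `E` and an endpoint map
`ends : E → V × V` (self-loops and multiple edges are allowed).  A half-edge is
a pair `(e, b) : E × Bool`, whose vertex is the corresponding endpoint of `e`.

We work with the ℤ-basis of the Świątkowski complex consisting of a monomial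
`m : E →₀ ℕ` in the edges together with a choice, for each vertex `v`, of a
local generator from `S(v) = ℤ⟨∅, v, h ∈ H(v)⟩`: a half-edge at `v`
(`Sum.inl`), the vertex itself (`Sum.inr true`), or `∅` (`Sum.inr false`).
The differential is the ℤ[E]-linear derivation with `∂h = e(h) - v(h)`,
with Koszul signs determined by a fixed enumeration of the vertices.
`degB` is the homological degree (number of half-edge factors) and `wtB` is the
weight (number of particles).  `hasDW i k` is the subgroup of chains of pure
degree `i` and weight `k`; `cyc i k` the corresponding cycles, `bdry i k` the
boundaries of degree/weight `(i+1, k)` chains, and `Hgr i k` their quotient,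
which is `H_i(B_k Γ)`.  `stab e` is edge stabilization (multiplication by `e`).
-/

namespace Swiatkowski

variable {V E : Type} [Fintype V] [Fintype E] [DecidableEq V] [DecidableEq E]

/-- The vertex of a half-edge. -/
def vtx (ends : E → V × V) (h : E × Bool) : V :=
  cond h.2 (ends h.1).2 (ends h.1).1

/-- The local generators at a vertex `v`: a half-edge at `v`, or the vertex
generator (`true`), or `∅` (`false`). -/
abbrev VGen (ends : E → V × V) (v : V) : Type :=
  {h : E × Bool // vtx ends h = v} ⊕ Bool

/-- A choice of local generator at every vertex. -/
abbrev States (ends : E → V × V) : Type := ∀ v : V, VGen ends v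

/-- The ℤ-basis of the Świątkowski complex: an edge monomial together with a
state. -/
abbrev Bas (ends : E → V × V) : Type := (E →₀ ℕ) × States ends

/-- The underlying ℤ-module of the Świątkowski complex. -/
abbrev SC (ends : E → V × V) : Type := Bas ends →₀ ℤ

variable (ends : E → V × V)

/-- An enumeration of the vertices, used for Koszul signs. -/
noncomputable def idx : V → ℕ := fun v => ((Fintype.equivFin V) v : ℕ)

/-- The Koszul sign of the half-edge slot at `v` inside the state `f`. -/
noncomputable def sgn (f : States ends) (v : V) : ℤ :=
  (-1) ^ (Finset.univ.filter fun w => idx w < idx v ∧ (f w).isLeft = true).card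

/-- Homological degree of a basis element: its number of half-edge factors. -/
def degB (b : Bas ends) : ℕ :=
  (Finset.univ.filter fun v => (b.2 v).isLeft = true).card

/-- Weight (particle number) of a basis element. -/
def wtB (b : Bas ends) : ℕ :=
  (b.1.sum fun _ n => n) + ∑ v : V, Sum.elim (fun _ => 1) (fun t => cond t 1 0) (b.2 v)

/-- Value of the differential on a basis element: the signed sum over the
half-edge slots `h` of the substitutions `h ↦ e(h)` and `h ↦ v(h)`. -/
noncomputable def Db (b : Bas ends) : SC ends :=
  ∑ v : V,
    (match b.2 v with
      | Sum.inl h =>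
          sgn ends b.2 v •
            (Finsupp.single (b.1 + Finsupp.single h.1.1 1,
                Function.update b.2 v (Sum.inr false)) (1 : ℤ)
              - Finsupp.single (b.1, Function.update b.2 v (Sum.inr true)) (1 : ℤ))
      | Sum.inr _ => 0)

/-- The differential of the Świątkowski complex. -/
noncomputable def D : SC ends →ₗ[ℤ] SC ends :=
  Finsupp.linearCombination ℤ (Db ends)

/-- The subgroup of chains of pure homological degree `i` and weight `k`. -/
noncomputable def hasDW (i k : ℕ) : Submodule ℤ (SC ends) where
  carrier := {x | ∀ b ∈ x.support, degB ends b = i ∧ wtB ends b = k}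
  add_mem' := by
    intro x y hx hy b hb
    rcases Finset.mem_union.mp (Finsupp.support_add hb) with h | h
    exacts [hx b h, hy b h]
  zero_mem' := by simp
  smul_mem' := by
    intro c x hx b hb
    exact hx b (Finsupp.support_smul hb)

/-- Cycles of degree `i` and weight `k`. -/
noncomputable def cyc (i k : ℕ) : Submodule ℤ (SC ends) := LinearMap.ker (D ends) ⊓ hasDW ends i k

/-- Boundaries of degree `i` and weight `k` chains. -/
noncomputable def bdry (i k : ℕ) : Submodule ℤ (SC ends) := Submodule.map (D ends) (hasDW ends (i + 1) k)

/-- The homology `H_i(B_k Γ)` of the weight-`k` Świątkowski complex. -/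
noncomputable def Hgr (i k : ℕ) :=
  cyc ends i k ⧸ Submodule.comap (cyc ends i k).subtype (bdry ends i k)

noncomputable instance (i k : ℕ) : AddCommGroup (Hgr ends i k) :=
  inferInstanceAs (AddCommGroup
    (cyc ends i k ⧸ Submodule.comap (cyc ends i k).subtype (bdry ends i k)))

/-- Edge stabilization: multiplication by the edge `e`. -/
noncomputable def stab (e : E) : SC ends →ₗ[ℤ] SC ends :=
  Finsupp.lmapDomain ℤ ℤ fun b => (b.1 + Finsupp.single e 1, b.2)

end Swiatkowski

namespace Theta3

open Swiatkowski

/-- The theta graph `Θ₃`: two vertices (`false` and `true`) joined by three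
edges. -/
def ends : Fin 3 → Bool × Bool := fun _ => (false, true)

/-- The state placing the half-edge of edge `j` at the vertex `u`, with `∅` at
the other vertex. -/
def stateH (u : Bool) (j : Fin 3) : States ends := fun w =>
  match w with
  | false => if u = false then Sum.inl ⟨(j, false), rfl⟩ else Sum.inr false
  | true => if u = true then Sum.inl ⟨(j, true), rfl⟩ else Sum.inr false

/-- The degree-one basis chain `h_{u,j}`. -/
noncomputable def sH (u : Bool) (j : Fin 3) : SC ends :=
  Finsupp.single ((0 : Fin 3 →₀ ℕ), stateH u j) (1 : ℤ)

/-- The clockwise star cycle `α` at the first vertex: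
`e₃(h₁ − h₂) + e₂(h₃ − h₁) + e₁(h₂ − h₃)`. -/
noncomputable def starCyc₁ : SC ends :=
  stab ends 2 (sH false 0 - sH false 1) + stab ends 1 (sH false 2 - sH false 0)
    + stab ends 0 (sH false 1 - sH false 2)

/-- The clockwise star cycle `α'` at the second vertex; in a fixed planar
embedding the clockwise order of the half-edges at the second vertex is the
reverse of that at the first, giving the ordering `(h₂, h₁, h₃)`:
`e₃(h₂ − h₁) + e₁(h₃ − h₂) + e₂(h₁ − h₃)`. -/
noncomputable def starCyc₂ : SC ends :=
  stab ends 2 (sH true 1 - sH true 0) + stab ends 0 (sH true 2 - sH true 1)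
    + stab ends 1 (sH true 0 - sH true 2)

/-- Degree-2 state: half-edge `(i,false)` at `false`, `(j,true)` at `true`. -/
def st2 (i j : Fin 3) : States ends := fun w =>
  match w with
  | false => Sum.inl ⟨(i, false), rfl⟩
  | true => Sum.inl ⟨(j, true), rfl⟩

def Tst (i : Fin 3) : States ends := fun w =>
  match w with
  | false => Sum.inl ⟨(i, false), rfl⟩
  | true => Sum.inr true

def Bst (j : Fin 3) : States ends := fun w =>
  match w with
  | false => Sum.inr true
  | true => Sum.inl ⟨(j, true), rfl⟩

lemma upd_ff (i j : Fin 3) :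
    Function.update (st2 i j) false (Sum.inr false) = stateH true j := by
  funext w; cases w <;> simp [Function.update, st2, stateH]

lemma upd_tf (i j : Fin 3) :
    Function.update (st2 i j) true (Sum.inr false) = stateH false i := by
  funext w; cases w <;> simp [Function.update, st2, stateH]

lemma upd_fv (i j : Fin 3) :
    Function.update (st2 i j) false (Sum.inr true) = Bst j := by
  funext w; cases w <;> simp [Function.update, st2, Bst]

lemma upd_tv (i j : Fin 3) :
    Function.update (st2 i j) true (Sum.inr true) = Tst i := by
  funext w; cases w <;> simp [Function.update, st2, Tst]

lemma idx_cases :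
    (idx (V := Bool) false = 0 ∧ idx (V := Bool) true = 1) ∨
    (idx (V := Bool) false = 1 ∧ idx (V := Bool) true = 0) := by
  have h1 : (Fintype.equivFin Bool false : ℕ) < 2 := by
    simpa using (Fintype.equivFin Bool false).isLt
  have h2 : (Fintype.equivFin Bool true : ℕ) < 2 := by
    simpa using (Fintype.equivFin Bool true).isLt
  have h3 : (Fintype.equivFin Bool false : ℕ) ≠ (Fintype.equivFin Bool true : ℕ) := by
    exact fun h => Bool.false_ne_true ((Fintype.equivFin Bool).injective (Fin.ext h))
  unfold idx
  omega

lemma sgn_small (s : States ends) (v : Bool) (h0 : idx (V := Bool) v = 0) :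
    sgn ends s v = 1 := by
  unfold sgn
  rw [Finset.filter_eq_empty_iff.mpr (by intro w _; rw [h0]; simp)]
  simp

lemma sgn_big (i j : Fin 3) (v : Bool) (h0 : idx (V := Bool) v = 1)
    (h1 : idx (V := Bool) (!v) = 0) :
    sgn ends (st2 i j) v = -1 := by
  unfold sgn
  have : (Finset.univ.filter fun w => idx (V := Bool) w < idx (V := Bool) v ∧
      ((st2 i j) w).isLeft = true) = {!v} := by
    ext w
    by_cases hw : w = !v
    · subst hw; simp [h1, h0, st2]; cases v <;> rfl
    · have : w = v := by cases w <;> cases v <;> simp_all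
      subst this; simp [h0]
  rw [this]; simp

lemma Dst2 (i j : Fin 3) :
    D ends (Finsupp.single ((0 : Fin 3 →₀ ℕ), st2 i j) (1 : ℤ)) =
      sgn ends (st2 i j) false •
        (Finsupp.single (Finsupp.single i 1, stateH true j) (1 : ℤ)
          - Finsupp.single (0, Bst j) (1 : ℤ))
      + sgn ends (st2 i j) true •
        (Finsupp.single (Finsupp.single j 1, stateH false i) (1 : ℤ)
          - Finsupp.single (0, Tst i) (1 : ℤ)) := by
  rw [D, Finsupp.linearCombination_single, one_smul, Db, Fintype.sum_bool]
  have hf : (st2 i j) false = Sum.inl ⟨(i, false), rfl⟩ := rfl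
  have ht : (st2 i j) true = Sum.inl ⟨(j, true), rfl⟩ := rfl
  rw [show ((0 : Fin 3 →₀ ℕ), st2 i j).2 = st2 i j from rfl]
  simp only [hf, ht]
  simp only [upd_ff, upd_tf, upd_fv, upd_tv, zero_add]
  abel
lemma mem_hasDW (i j : Fin 3) (c : ℤ) :
    Finsupp.single ((0 : Fin 3 →₀ ℕ), st2 i j) c ∈ hasDW ends 2 2 := by
  intro b hb
  have hb' := Finsupp.support_single_subset hb
  rw [Finset.mem_singleton] at hb'
  subst hb'
  constructor
  · rw [degB, Finset.filter_true_of_mem (by intro v _; cases v <;> rfl)]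
    simp
  · rw [wtB]
    simp [Fintype.sum_bool, st2]

/-- **θ-relation.** In the homology of the configuration spaces
of the theta graph `Θ₃`, the clockwise star classes at the two essential
vertices are equal: `α − α' = 0` in `H₁(B₂(Θ₃))`, i.e. the difference of the
two star cycles is the boundary of a degree-2, weight-2 chain of the
Świątkowski complex of `Θ₃`. -/
theorem theta_relation :
    ∃ z ∈ hasDW ends 2 2, D ends z = starCyc₁ - starCyc₂ := by
  rcases idx_cases with ⟨h0, h1⟩ | ⟨h0, h1⟩
  · refine ⟨Finsupp.single ((0 : Fin 3 →₀ ℕ), st2 0 1) (1 : ℤ)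
        - Finsupp.single (0, st2 0 2) 1 - Finsupp.single (0, st2 1 0) 1
        + Finsupp.single (0, st2 1 2) 1 + Finsupp.single (0, st2 2 0) 1
        - Finsupp.single (0, st2 2 1) 1, ?_, ?_⟩
    · exact Submodule.sub_mem _ (Submodule.add_mem _ (Submodule.add_mem _
        (Submodule.sub_mem _ (Submodule.sub_mem _ (mem_hasDW 0 1 1) (mem_hasDW 0 2 1))
          (mem_hasDW 1 0 1)) (mem_hasDW 1 2 1)) (mem_hasDW 2 0 1)) (mem_hasDW 2 1 1)
    · have hs : ∀ i j : Fin 3, sgn ends (st2 i j) false = 1 := fun i j =>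
        sgn_small (st2 i j) false h0
      have hb : ∀ i j : Fin 3, sgn ends (st2 i j) true = -1 := fun i j =>
        sgn_big i j true h1 (by simpa using h0)
      simp only [map_sub, map_add, Dst2, hs, hb]
      rw [starCyc₁, starCyc₂]
      simp only [stab, sH, map_sub, Finsupp.lmapDomain_apply, Finsupp.mapDomain_single,
        zero_add, one_smul, neg_smul]
      abel
  · refine ⟨-(Finsupp.single ((0 : Fin 3 →₀ ℕ), st2 0 1) (1 : ℤ)
        - Finsupp.single (0, st2 0 2) 1 - Finsupp.single (0, st2 1 0) 1
        + Finsupp.single (0, st2 1 2) 1 + Finsupp.single (0, st2 2 0) 1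
        - Finsupp.single (0, st2 2 1) 1), ?_, ?_⟩
    · exact Submodule.neg_mem _ (Submodule.sub_mem _ (Submodule.add_mem _ (Submodule.add_mem _
        (Submodule.sub_mem _ (Submodule.sub_mem _ (mem_hasDW 0 1 1) (mem_hasDW 0 2 1))
          (mem_hasDW 1 0 1)) (mem_hasDW 1 2 1)) (mem_hasDW 2 0 1)) (mem_hasDW 2 1 1))
    · have hs : ∀ i j : Fin 3, sgn ends (st2 i j) true = 1 := fun i j =>
        sgn_small (st2 i j) true h1
      have hb : ∀ i j : Fin 3, sgn ends (st2 i j) false = -1 := fun i j =>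
        sgn_big i j false h0 (by simpa using h1)
      simp only [map_neg, map_sub, map_add, Dst2, hs, hb]
      rw [starCyc₁, starCyc₂]
      simp only [stab, sH, map_sub, Finsupp.lmapDomain_apply, Finsupp.mapDomain_single,
        zero_add, one_smul, neg_smul]
      abel


end Theta3
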